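/- Suppose r(x) is a proper rational function all of whose poles are primitive n-th roots of unity. Then r is the generating function of a quasi-polynomial q(k) = c_d(k)k^d + ⋯ + c_0(k), where each coefficient function c_j is either identically zero or has minimum period exactly n. -/

import Mathlib

open PowerSeries Polynomial

lemma myIndep (T : Finset ℂ) (f : ℂ → ℂ)
    (h : ∀ k : ℕ, ∑ x ∈ T, f x * x ^ k = 0) : ∀ x ∈ T, f x = 0 := by
  intro x₀ hx₀
  set p : Polynomial ℂ := ∏ y ∈ T.erase x₀, (Polynomial.X - Polynomial.C y) with hp
  have key : ∑ x ∈ T, f x * p.eval x = 0 := by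
    have e1 : ∀ x : ℂ, f x * p.eval x
        = ∑ t ∈ Finset.range (p.natDegree + 1), p.coeff t * (f x * x ^ t) := by
      intro x
      rw [eval_eq_sum_range' (Nat.lt_succ_self _), Finset.mul_sum]
      exact Finset.sum_congr rfl fun t _ => by ring
    rw [Finset.sum_congr rfl fun x _ => e1 x, Finset.sum_comm]
    simp [← Finset.mul_sum, h]
  have hsingle : ∑ x ∈ T, f x * p.eval x = f x₀ * p.eval x₀ := by
    refine Finset.sum_eq_single_of_mem x₀ hx₀ (fun b hb hne => ?_)
    have : p.eval b = 0 := by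
      rw [hp, eval_prod]
      exact Finset.prod_eq_zero (Finset.mem_erase.mpr ⟨hne, hb⟩) (by simp)
    simp [this]
  have hpe : p.eval x₀ ≠ 0 := by
    rw [hp, eval_prod]
    refine Finset.prod_ne_zero_iff.mpr fun y hy => ?_
    have := (Finset.mem_erase.mp hy).1
    simp only [eval_sub, eval_X, eval_C, sub_ne_zero]
    exact fun hc => this hc.symm
  have := hsingle ▸ key
  exact (mul_eq_zero.mp this).resolve_right hpe

noncomputable def chPoly (m : ℕ) : Polynomial ℂ :=
  Polynomial.C ((m.factorial : ℂ))⁻¹ * ((ascPochhammer ℂ m).comp (Polynomial.X + 1))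

lemma chPoly_eval (m k : ℕ) : (chPoly m).eval (k : ℂ) = ((m + k).choose m : ℂ) := by
  have h1 : (ascPochhammer ℂ m).eval ((k : ℂ) + 1) = (((k+1).ascFactorial m : ℕ) : ℂ) := by
    rw [← ascPochhammer_nat_eq_ascFactorial, ascPochhammer_eval_cast]
    norm_num
  have h2 : (k+1).ascFactorial m = m.factorial * (k + m).choose m :=
    Nat.ascFactorial_eq_factorial_mul_choose k m
  simp only [chPoly, eval_mul, eval_C, eval_comp, eval_add, eval_X, eval_one, h1, h2]
  have : (m.factorial : ℂ) ≠ 0 := Nat.cast_ne_zero.mpr m.factorial_pos.ne'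
  push_cast
  rw [inv_mul_cancel_left₀ this, Nat.add_comm k m]

lemma geomInv (ω : ℂ) (hω : ω ≠ 0) (m : ℕ) :
    ((Polynomial.X - Polynomial.C ω : Polynomial ℂ) : PowerSeries ℂ) ^ (m + 1) *
      PowerSeries.mk (fun k => ((-ω)⁻¹) ^ (m+1) * (ω⁻¹) ^ k * ((m + k).choose m : ℂ)) = 1 := by
  have base : (PowerSeries.mk fun n => ((m + n).choose m : ℂ)) * ((1 - PowerSeries.X) ^ (m+1)) = 1 :=
    PowerSeries.mk_add_choose_mul_one_sub_pow_eq_one ℂ m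
  have resc := congrArg (PowerSeries.rescale ω⁻¹) base
  rw [map_mul, map_pow, map_sub, map_one, rescale_X, rescale_mk] at resc
  -- resc : mk (fun n => ω⁻¹^n * choose) * (1 - C ω⁻¹ * X)^(m+1) = 1
  have hfac : ((Polynomial.X - Polynomial.C ω : Polynomial ℂ) : PowerSeries ℂ)
      = PowerSeries.C (-ω) * (1 - PowerSeries.C ω⁻¹ * PowerSeries.X) := by
    rw [Polynomial.coe_sub, Polynomial.coe_X, Polynomial.coe_C]
    have h1 : PowerSeries.C (-ω) * (PowerSeries.C ω⁻¹ * PowerSeries.X) = -PowerSeries.X := by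
      rw [← mul_assoc, ← map_mul, neg_mul, mul_inv_cancel₀ hω, map_neg, map_one, neg_one_mul]
    rw [mul_sub, mul_one, h1, map_neg, sub_neg_eq_add]
    ring
  have hmk : (PowerSeries.mk fun k => ((-ω)⁻¹) ^ (m+1) * (ω⁻¹) ^ k * ((m + k).choose m : ℂ))
      = PowerSeries.C (((-ω)⁻¹) ^ (m+1)) * PowerSeries.mk (fun n => (ω⁻¹)^n * ((m + n).choose m : ℂ)) := by
    ext k
    rw [PowerSeries.coeff_C_mul]
    simp [PowerSeries.coeff_mk, mul_assoc]
  rw [hmk, hfac, mul_pow, ← map_pow, mul_left_comm, ← mul_assoc, ← mul_assoc, ← map_mul]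
  rw [inv_pow, inv_mul_cancel₀ (pow_ne_zero _ (neg_ne_zero.mpr hω))]
  rw [map_one, one_mul, mul_comm]
  exact resc

lemma auxPF (N : ℕ) : ∀ (den num : Polynomial ℂ), den.natDegree ≤ N → den ≠ 0 →
    (∀ ω : ℂ, den.IsRoot ω → ω ≠ 0) → num.degree < den.degree →
    ∃ (T : Finset ℂ) (Q : ℂ → Polynomial ℂ), (∀ x ∈ T, den.IsRoot x) ∧
      (den : PowerSeries ℂ) * PowerSeries.mk (fun k => ∑ x ∈ T, (Q x).eval (k : ℂ) * (x⁻¹) ^ k)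
        = (num : PowerSeries ℂ) := by
  induction N with
  | zero =>
    intro den num hN hden h0 hdeg
    have hd0 : den.natDegree = 0 := Nat.le_zero.mp hN
    have hdegden : den.degree = 0 := by
      rw [degree_eq_natDegree hden, hd0]; rfl
    have hnum0 : num = 0 := by
      by_contra hc
      exact absurd (hdegden ▸ hdeg) (not_lt.mpr (zero_le_degree_iff.mpr hc))
    refine ⟨∅, 0, by simp, ?_⟩
    have : PowerSeries.mk (fun k : ℕ => ∑ x ∈ (∅ : Finset ℂ), ((0:ℂ→Polynomial ℂ) x).eval (k:ℂ) * (x⁻¹)^k) = 0 := by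
      ext j; simp
    rw [this, mul_zero, hnum0, Polynomial.coe_zero]
  | succ N ih =>
    intro den num hN hden h0 hdeg
    by_cases hd0 : den.natDegree = 0
    · have hdegden : den.degree = 0 := by
        rw [degree_eq_natDegree hden, hd0]; rfl
      have hnum0 : num = 0 := by
        by_contra hc
        exact absurd (hdegden ▸ hdeg) (not_lt.mpr (zero_le_degree_iff.mpr hc))
      refine ⟨∅, 0, by simp, ?_⟩
      have : PowerSeries.mk (fun k : ℕ => ∑ x ∈ (∅ : Finset ℂ), ((0:ℂ→Polynomial ℂ) x).eval (k:ℂ) * (x⁻¹)^k) = 0 := by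
        ext j; simp
      rw [this, mul_zero, hnum0, Polynomial.coe_zero]
    · have hdpos : 0 < den.natDegree := Nat.pos_of_ne_zero hd0
      obtain ⟨ω, hω⟩ : ∃ ω, den.IsRoot ω := by
        apply IsAlgClosed.exists_root den
        rw [degree_eq_natDegree hden]
        exact_mod_cast hd0
      have hω0 : ω ≠ 0 := h0 ω hω
      obtain ⟨h, hfac, hnd⟩ := den.exists_eq_pow_rootMultiplicity_mul_and_not_dvd hden ω
      set m := den.rootMultiplicity ω with hmdef
      have hm : 0 < m := (rootMultiplicity_pos hden).mpr hω
      obtain ⟨m', hm'⟩ := Nat.exists_eq_succ_of_ne_zero hm.ne'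
      have hh0 : h ≠ 0 := by
        intro hc; apply hden; rw [hfac, hc, mul_zero]
      have hhω : h.eval ω ≠ 0 := fun hc => hnd (dvd_iff_isRoot.mpr hc)
      set den' := (Polynomial.X - Polynomial.C ω) ^ m' * h with hden'def
      have hsplit : den = (Polynomial.X - Polynomial.C ω) * den' := by
        rw [hfac, hm', hden'def, pow_succ]; ring
      have hden'0 : den' ≠ 0 := mul_ne_zero (pow_ne_zero _ (X_sub_C_ne_zero ω)) hh0
      have hndeq : den.natDegree = den'.natDegree + 1 := by
        rw [hsplit, natDegree_mul (X_sub_C_ne_zero ω) hden'0, natDegree_X_sub_C]; ring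
      have hdegsplit : den.degree = 1 + den'.degree := by
        rw [hsplit, degree_mul, degree_X_sub_C]
      set A := num.eval ω / h.eval ω with hA
      set numA := num - Polynomial.C A * h with hnumA
      have hroot : numA.eval ω = 0 := by
        rw [hnumA, eval_sub, eval_mul, eval_C, hA, div_mul_cancel₀ _ hhω, sub_self]
      obtain ⟨num', hnum'⟩ := dvd_iff_isRoot.mpr hroot
      have hdegh : h.degree < den.degree := by
        apply Polynomial.degree_lt_degree
        rw [hfac, natDegree_mul (pow_ne_zero _ (X_sub_C_ne_zero ω)) hh0, natDegree_pow,
          natDegree_X_sub_C, mul_one]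
        omega
      have hdegA : numA.degree < den.degree := by
        rw [hnumA]
        apply lt_of_le_of_lt (degree_sub_le _ _)
        apply max_lt hdeg
        apply lt_of_le_of_lt _ hdegh
        apply le_trans (degree_mul_le _ _)
        calc (Polynomial.C A).degree + h.degree ≤ 0 + h.degree := by
              exact add_le_add degree_C_le le_rfl
          _ = h.degree := zero_add _
      have hdeg' : num'.degree < den'.degree := by
        by_cases hnum'0 : num' = 0
        · rw [hnum'0, degree_zero]
          exact bot_lt_iff_ne_bot.mpr (fun hc => hden'0 (degree_eq_bot.mp hc))
        · have h1 : numA.degree = 1 + num'.degree := by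
            rw [hnum', degree_mul, degree_X_sub_C]
          rw [h1, hdegsplit] at hdegA
          exact (WithBot.add_lt_add_iff_left (by simp : (1 : WithBot ℕ) ≠ ⊥)).mp hdegA
      have hroots' : ∀ x : ℂ, den'.IsRoot x → x ≠ 0 := by
        intro x hx
        apply h0
        rw [hsplit]
        simp only [IsRoot, eval_mul] at hx ⊢
        rw [hx, mul_zero]
      obtain ⟨T', Q', hT'root, hT'eq⟩ := ih den' num' (by omega) hden'0 hroots' hdeg'
      set B := A * ((-ω)⁻¹) ^ (m' + 1) with hB
      set QQ : ℂ → Polynomial ℂ := fun x =>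
        (if x ∈ T' then Q' x else 0) + (if x = ω then Polynomial.C B * chPoly m' else 0) with hQQ
      refine ⟨insert ω T', QQ, ?_, ?_⟩
      · intro x hx
        rcases Finset.mem_insert.mp hx with rfl | hx'
        · exact hω
        · have := hT'root x hx'
          simp only [IsRoot, hsplit, eval_mul] at this ⊢
          rw [this, mul_zero]
      · have hFun : ∀ k : ℕ, (∑ x ∈ insert ω T', (QQ x).eval (k:ℂ) * (x⁻¹)^k)
            = (∑ x ∈ T', (Q' x).eval (k:ℂ) * (x⁻¹)^k)
              + B * (chPoly m').eval (k:ℂ) * (ω⁻¹)^k := by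
          intro k
          have hterm : ∀ x : ℂ, (QQ x).eval (k:ℂ) * (x⁻¹)^k
              = (if x ∈ T' then (Q' x).eval (k:ℂ) * (x⁻¹)^k else 0)
                + (if x = ω then (Polynomial.C B * chPoly m').eval (k:ℂ) * (x⁻¹)^k else 0) := by
            intro x
            rw [hQQ]
            simp only [eval_add, add_mul, apply_ite (Polynomial.eval ((k:ℂ))), eval_zero,
              ite_mul, zero_mul]
          rw [Finset.sum_congr rfl fun x _ => hterm x, Finset.sum_add_distrib]
          congr 1
          · rw [Finset.sum_ite_mem, Finset.inter_eq_right.mpr (Finset.subset_insert ω T')]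
          · rw [Finset.sum_ite_eq' (insert ω T') ω
              (fun x => (Polynomial.C B * chPoly m').eval (k:ℂ) * (x⁻¹)^k)]
            simp [Finset.mem_insert_self]
        have hmkadd : PowerSeries.mk (fun k : ℕ => ∑ x ∈ insert ω T', (QQ x).eval (k:ℂ) * (x⁻¹)^k)
            = PowerSeries.mk (fun k : ℕ => ∑ x ∈ T', (Q' x).eval (k:ℂ) * (x⁻¹)^k)
              + PowerSeries.mk (fun k : ℕ => B * (chPoly m').eval (k:ℂ) * (ω⁻¹)^k) := by
          ext j
          simp only [map_add, coeff_mk, hFun]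
        rw [hmkadd, mul_add]
        have hpart1 : (den : PowerSeries ℂ) *
            PowerSeries.mk (fun k : ℕ => ∑ x ∈ T', (Q' x).eval (k:ℂ) * (x⁻¹)^k)
            = ((num - Polynomial.C A * h : Polynomial ℂ) : PowerSeries ℂ) := by
          calc (den : PowerSeries ℂ) * PowerSeries.mk (fun k : ℕ => ∑ x ∈ T', (Q' x).eval (k:ℂ) * (x⁻¹)^k)
              = ((Polynomial.X - Polynomial.C ω : Polynomial ℂ) : PowerSeries ℂ) *
                ((den' : PowerSeries ℂ) * PowerSeries.mk (fun k : ℕ => ∑ x ∈ T', (Q' x).eval (k:ℂ) * (x⁻¹)^k)) := by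
                rw [hsplit, Polynomial.coe_mul, mul_assoc]
            _ = ((Polynomial.X - Polynomial.C ω : Polynomial ℂ) : PowerSeries ℂ) * (num' : PowerSeries ℂ) := by
                rw [hT'eq]
            _ = (((Polynomial.X - Polynomial.C ω) * num' : Polynomial ℂ) : PowerSeries ℂ) := by
                rw [Polynomial.coe_mul]
            _ = ((num - Polynomial.C A * h : Polynomial ℂ) : PowerSeries ℂ) := by rw [← hnum', hnumA]
        have hpart2 : (den : PowerSeries ℂ) *
            PowerSeries.mk (fun k : ℕ => B * (chPoly m').eval (k:ℂ) * (ω⁻¹)^k)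
            = ((Polynomial.C A * h : Polynomial ℂ) : PowerSeries ℂ) := by
          have hmkeq : PowerSeries.mk (fun k : ℕ => B * (chPoly m').eval (k:ℂ) * (ω⁻¹)^k)
              = PowerSeries.C A *
                PowerSeries.mk (fun k : ℕ => ((-ω)⁻¹) ^ (m'+1) * (ω⁻¹) ^ k * ((m' + k).choose m' : ℂ)) := by
            ext j
            simp only [PowerSeries.coeff_C_mul, coeff_mk, chPoly_eval, hB]
            ring
          calc (den : PowerSeries ℂ) * PowerSeries.mk (fun k : ℕ => B * (chPoly m').eval (k:ℂ) * (ω⁻¹)^k)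
              = (h : PowerSeries ℂ) * PowerSeries.C A *
                (((Polynomial.X - Polynomial.C ω : Polynomial ℂ) : PowerSeries ℂ) ^ (m'+1) *
                  PowerSeries.mk (fun k : ℕ => ((-ω)⁻¹) ^ (m'+1) * (ω⁻¹) ^ k * ((m' + k).choose m' : ℂ))) := by
                rw [hfac, hm', hmkeq, Polynomial.coe_mul, Polynomial.coe_pow]
                simp only [Nat.succ_eq_add_one]
                ring
            _ = (h : PowerSeries ℂ) * PowerSeries.C A * 1 := by rw [geomInv ω hω0 m']
            _ = ((Polynomial.C A * h : Polynomial ℂ) : PowerSeries ℂ) := by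
                rw [mul_one, Polynomial.coe_mul, Polynomial.coe_C, mul_comm]
        rw [hpart1, hpart2, ← Polynomial.coe_add, sub_add_cancel]

/-- Corollary `generalquasithm`: a proper rational function all
of whose poles are primitive n-th roots of unity is the generating function of
a quasi-polynomial each of whose coefficient functions is either identically
zero or has minimum period exactly `n`. -/
theorem rational_primitive_poles_quasipoly (n : ℕ) (hn : 0 < n)
    (num den : Polynomial ℂ) (hcop : IsCoprime num den) (hden : den ≠ 0)
    (hprop : num.degree < den.degree)
    (hpoles : ∀ ω : ℂ, den.IsRoot ω →
      ω ^ n = 1 ∧ ∀ r : ℕ, 0 < r → r < n → ω ^ r ≠ 1) :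
    ∃ (d : ℕ) (c : ℕ → ℤ → ℂ),
      (∀ j, ∃ p : ℕ, 0 < p ∧ ∀ k : ℤ, c j (k + p) = c j k) ∧
      (den : PowerSeries ℂ) *
          PowerSeries.mk (fun k : ℕ =>
            ∑ j ∈ Finset.range (d + 1), c j k * (k : ℂ) ^ j) =
        (num : PowerSeries ℂ) ∧
      ∀ j, j ≤ d → ((∀ k : ℤ, c j k = 0) ∨
        ((∀ k : ℤ, c j (k + n) = c j k) ∧
          ∀ m : ℕ, 0 < m → (∀ k : ℤ, c j (k + m) = c j k) → n ≤ m)) := by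
  have hnz : ∀ x : ℂ, den.IsRoot x → x ≠ 0 := by
    intro x hx hx0
    have := (hpoles x hx).1
    rw [hx0, zero_pow hn.ne'] at this
    exact zero_ne_one this
  obtain ⟨T, Q, hTroot, hTeq⟩ := auxPF den.natDegree den num le_rfl hden hnz hprop
  have hTnz : ∀ x ∈ T, x ≠ 0 := fun x hx => hnz x (hTroot x hx)
  have hTpow : ∀ x ∈ T, x ^ n = 1 := fun x hx => (hpoles x (hTroot x hx)).1
  set d := T.sup (fun x => (Q x).natDegree) with hd
  set c : ℕ → ℤ → ℂ := fun j k => ∑ x ∈ T, (Q x).coeff j * x ^ (-k) with hc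
  have hperiod : ∀ j : ℕ, ∀ k : ℤ, c j (k + n) = c j k := by
    intro j k
    apply Finset.sum_congr rfl
    intro x hx
    have hx0 := hTnz x hx
    congr 1
    have hxn : x ^ (-(n:ℤ)) = 1 := by
      rw [zpow_neg, zpow_natCast, hTpow x hx, inv_one]
    rw [neg_add, zpow_add₀ hx0, hxn, mul_one]
  refine ⟨d, c, fun j => ⟨n, hn, hperiod j⟩, ?_, ?_⟩
  · have hfeq : PowerSeries.mk (fun k : ℕ => ∑ j ∈ Finset.range (d+1), c j k * (k:ℂ)^j)
        = PowerSeries.mk (fun k : ℕ => ∑ x ∈ T, (Q x).eval (k:ℂ) * (x⁻¹)^k) := by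
      ext k
      rw [coeff_mk, coeff_mk]
      calc ∑ j ∈ Finset.range (d+1), c j k * (k:ℂ)^j
          = ∑ j ∈ Finset.range (d+1), ∑ x ∈ T,
              (Q x).coeff j * (k:ℂ)^j * x ^ (-(k:ℤ)) := by
            refine Finset.sum_congr rfl fun j _ => ?_
            rw [hc]
            simp only
            rw [Finset.sum_mul]
            exact Finset.sum_congr rfl fun x _ => by ring
        _ = ∑ x ∈ T, ∑ j ∈ Finset.range (d+1), (Q x).coeff j * (k:ℂ)^j * x ^ (-(k:ℤ)) :=
            Finset.sum_comm
        _ = ∑ x ∈ T, (Q x).eval (k:ℂ) * (x⁻¹)^k := by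
            refine Finset.sum_congr rfl fun x hx => ?_
            rw [← Finset.sum_mul,
              ← eval_eq_sum_range' (Nat.lt_succ_of_le (Finset.le_sup (f := fun x => (Q x).natDegree) hx))]
            congr 1
            rw [zpow_neg, zpow_natCast, inv_pow]
    rw [hfeq]
    exact hTeq
  · intro j hj
    by_cases hzero : ∀ k : ℤ, c j k = 0
    · exact Or.inl hzero
    · refine Or.inr ⟨hperiod j, ?_⟩
      intro m hm hper
      by_contra hlt
      push_neg at hlt
      have hind : ∀ x ∈ T, (Q x).coeff j * (x ^ (-(m:ℤ)) - 1) = 0 := by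
        apply myIndep
        intro k
        have h1 := hper (-(k:ℤ))
        rw [hc] at h1
        simp only at h1
        have hterm : ∀ x ∈ T, (Q x).coeff j * (x ^ (-(m:ℤ)) - 1) * x ^ k
            = (Q x).coeff j * x ^ (-(-(k:ℤ) + m)) - (Q x).coeff j * x ^ (-(-(k:ℤ))) := by
          intro x hx
          have hx0 := hTnz x hx
          have e1 : x ^ (-(-(k:ℤ) + (m:ℤ))) = x ^ (k:ℤ) * x ^ (-(m:ℤ)) := by
            rw [neg_add, neg_neg, zpow_add₀ hx0]
          have e2 : x ^ (-(-(k:ℤ))) = x ^ (k:ℤ) := by rw [neg_neg]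
          rw [e1, e2, zpow_natCast]
          ring
        rw [Finset.sum_congr rfl hterm, Finset.sum_sub_distrib, h1, sub_self]
      have hex : ∃ x ∈ T, (Q x).coeff j ≠ 0 := by
        by_contra hall
        push_neg at hall
        apply hzero
        intro k
        rw [hc]
        exact Finset.sum_eq_zero fun x hx => by rw [hall x hx, zero_mul]
      obtain ⟨x, hxT, hxc⟩ := hex
      have hzero' := hind x hxT
      have hxm : x ^ (-(m:ℤ)) = 1 := by
        rcases mul_eq_zero.mp hzero' with h | h
        · exact absurd h hxc
        · exact sub_eq_zero.mp h
      have hxm' : x ^ m = 1 := by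
        rw [zpow_neg, zpow_natCast, inv_eq_one] at hxm
        exact hxm
      exact (hpoles x (hTroot x hxT)).2 m hm hlt hxm'
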